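/- For every integer d ≥ 3 there exist a positive integer N, an integral convex polytope P ⊂ ℝ^N of dimension d, and a polynomial p ∈ ℚ[X] of degree d such that p(n) = i(P,n) for every positive integer n, the coefficient of X in p is negative, and every other coefficient of p (the constant term and the coefficients of X^j for 2 ≤ j ≤ d) is positive. -/

import Mathlib

open Polynomial Pointwise

/-- An integral convex polytope in `ℝ^N`: the convex hull of a nonempty finite set of
points with integer coordinates. -/
def IsIntegralPolytope {N : ℕ} (P : Set (Fin N → ℝ)) : Prop :=
  ∃ V : Finset (Fin N → ℝ), V.Nonempty ∧
    (∀ v ∈ V, ∀ i, ∃ z : ℤ, v i = (z : ℝ)) ∧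
    P = convexHull ℝ (V : Set (Fin N → ℝ))

/-- The dimension of a polytope: the dimension of its affine span. -/
noncomputable def polytopeDim {N : ℕ} (P : Set (Fin N → ℝ)) : ℕ :=
  Module.finrank ℝ (vectorSpan ℝ P)

/-- `latticeCount P n = #(nP ∩ ℤ^N)`, the number of lattice points of the dilation `nP`. -/
noncomputable def latticeCount {N : ℕ} (P : Set (Fin N → ℝ)) (n : ℕ) : ℕ :=
  Set.ncard {x : Fin N → ℤ | (fun i => (x i : ℝ)) ∈ (n : ℝ) • P}


open Finset

/-- pairs (u,v) of naturals with u+v ≤ M -/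
def pairLE (M : ℕ) : Finset (ℕ × ℕ) := (range (M+1)).biUnion Finset.HasAntidiagonal.antidiagonal

lemma mem_pairLE {M : ℕ} {p : ℕ × ℕ} : p ∈ pairLE M ↔ p.1 + p.2 ≤ M := by
  simp only [pairLE, mem_biUnion, mem_range, Finset.HasAntidiagonal.mem_antidiagonal, Nat.lt_succ_iff]
  constructor
  · rintro ⟨a, ha, rfl⟩; exact ha
  · intro h; exact ⟨p.1 + p.2, h, rfl⟩

lemma card_pairLE (M : ℕ) : (pairLE M).card * 2 = (M+1) * (M+2) := by
  have hdisj : ∀ x ∈ range (M+1), ∀ y ∈ range (M+1), x ≠ y →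
      Disjoint (Finset.HasAntidiagonal.antidiagonal x) (Finset.HasAntidiagonal.antidiagonal y) := by
    intro x _ y _ hxy
    simp only [Finset.disjoint_left, Finset.HasAntidiagonal.mem_antidiagonal]
    rintro p rfl h; exact hxy h
  rw [pairLE, card_biUnion hdisj]
  simp only [Nat.card_antidiagonal]
  have key : ∀ n : ℕ, (∑ x ∈ range (n+1), (x+1)) * 2 = (n+1) * (n+2) := by
    intro n
    induction n with
    | zero => simp
    | succ m ih => rw [Finset.sum_range_succ, add_mul, ih]; ring
  exact key M

/-- triples (u,v,w) of naturals with u+v+w ≤ M -/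
def tripLE (M : ℕ) : Finset (ℕ × ℕ × ℕ) :=
  (range (M+1)).biUnion (fun w =>
    (pairLE (M - w)).map ⟨fun p => (p.1, p.2, w), by intro a b h; simpa [Prod.ext_iff] using h⟩)

lemma mem_tripLE {M : ℕ} {t : ℕ × ℕ × ℕ} : t ∈ tripLE M ↔ t.1 + t.2.1 + t.2.2 ≤ M := by
  obtain ⟨u, v, w⟩ := t
  simp only [tripLE, mem_biUnion, mem_range, Finset.mem_map, Function.Embedding.coeFn_mk,
    Nat.lt_succ_iff, Prod.ext_iff]
  constructor
  · rintro ⟨a, ha, ⟨p1, p2⟩, hp, rfl, rfl, rfl⟩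
    have := mem_pairLE.1 hp
    change p1 + p2 + a ≤ M; omega
  · intro h
    exact ⟨w, by omega, (u, v), mem_pairLE.2 (by omega), rfl, rfl, rfl⟩

lemma card_tripLE (M : ℕ) : (tripLE M).card * 6 = (M+1) * (M+2) * (M+3) := by
  have hdisj : ∀ x ∈ range (M+1), ∀ y ∈ range (M+1), x ≠ y →
      Disjoint ((pairLE (M - x)).map ⟨fun p => (p.1, p.2, x), by intro a b h; simpa [Prod.ext_iff] using h⟩)
        ((pairLE (M - y)).map ⟨fun p => (p.1, p.2, y), by intro a b h; simpa [Prod.ext_iff] using h⟩) := by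
    intro x _ y _ hxy
    simp only [Finset.disjoint_left, Finset.mem_map, Function.Embedding.coeFn_mk]
    rintro p ⟨a, _, rfl⟩ ⟨b, _, h⟩
    exact hxy (congrArg (fun q => q.2.2) h).symm
  rw [tripLE, card_biUnion hdisj]
  simp only [Finset.card_map]
  have key : ∀ n : ℕ, (∑ w ∈ range (n+1), (pairLE (n - w)).card) * 6 = (n+1)*(n+2)*(n+3) := by
    intro n
    induction n with
    | zero => simp [pairLE]
    | succ m ih =>
        have step : ∑ w ∈ range (m+2), (pairLE (m + 1 - w)).card
            = (pairLE (m+1)).card + ∑ w ∈ range (m+1), (pairLE (m - w)).card := by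
          rw [Finset.sum_range_succ' (fun w => (pairLE (m + 1 - w)).card)]
          simp only [Nat.succ_sub_succ, Nat.sub_zero, Nat.add_comm 1 m]
          ring
        rw [step, add_mul, ih]
        have h2 := card_pairLE (m+1)
        nlinarith [h2]
  exact key M
/-- triples with u+v+w ≤ M-2 (empty if M < 2), realized as a filter of tripLE M -/
def tripLEF (M : ℕ) : Finset (ℕ × ℕ × ℕ) :=
  (tripLE M).filter (fun t => t.1 + t.2.1 + t.2.2 + 2 ≤ M)

lemma mem_tripLEF {M : ℕ} {t : ℕ × ℕ × ℕ} : t ∈ tripLEF M ↔ t.1 + t.2.1 + t.2.2 + 2 ≤ M := by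
  simp only [tripLEF, Finset.mem_filter, mem_tripLE]
  omega

lemma card_tripLEF (M : ℕ) : (tripLEF M).card * 6 = (M-1) * M * (M+1) := by
  rcases Nat.lt_or_ge M 2 with h | h
  · have : tripLEF M = ∅ := by
      rw [Finset.eq_empty_iff_forall_notMem]
      intro t ht
      have := mem_tripLEF.1 ht
      omega
    rw [this]
    interval_cases M <;> norm_num
  · obtain ⟨m, rfl⟩ : ∃ m, M = m + 2 := ⟨M - 2, by omega⟩
    have : tripLEF (m+2) = tripLE m := by
      ext t
      rw [mem_tripLEF, mem_tripLE]
      omega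
    have h1 : m + 2 - 1 = m + 1 := by omega
    rw [this, card_tripLE, h1]

/-- the master index finset: (r, (u,v,q)) with r < 18, u+v+q ≤ N, and if r ≠ 0 also u+v+q ≤ N-2 -/
def DD (N : ℕ) : Finset (ℕ × (ℕ × ℕ × ℕ)) :=
  (range 18).biUnion (fun r =>
    ((if r = 0 then tripLE N else tripLEF N)).map
      ⟨fun t => (r, t), by intro a b h; simpa [Prod.ext_iff] using h⟩)

lemma mem_DD {N : ℕ} {a : ℕ × (ℕ × ℕ × ℕ)} : a ∈ DD N ↔
    a.1 < 18 ∧ a.2.1 + a.2.2.1 + a.2.2.2 ≤ N ∧ (a.1 ≠ 0 → a.2.1 + a.2.2.1 + a.2.2.2 + 2 ≤ N) := by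
  obtain ⟨r, t⟩ := a
  simp only [DD, mem_biUnion, mem_range, Finset.mem_map, Function.Embedding.coeFn_mk,
    Prod.mk.injEq]
  constructor
  · rintro ⟨r', hr', t', ht', h⟩; obtain ⟨h1, h2⟩ := Prod.mk.inj h; subst r t
    by_cases h : r' = 0
    · subst h; simp only [if_pos rfl] at ht'; exact ⟨hr', mem_tripLE.1 ht', by simp⟩
    · rw [if_neg h] at ht'
      have := mem_tripLEF.1 ht'
      exact ⟨hr', by omega, fun _ => this⟩
  · rintro ⟨hr, h1, h2⟩
    refine ⟨r, hr, t, ?_, rfl⟩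
    by_cases h : r = 0
    · rw [if_pos h]; exact mem_tripLE.2 h1
    · rw [if_neg h]; exact mem_tripLEF.2 (h2 h)

lemma card_DD (N : ℕ) : (DD N).card * 6 = (N+1)*(N+2)*(N+3) + 17 * ((N-1)*N*(N+1)) := by
  have hdisj : ∀ x ∈ range 18, ∀ y ∈ range 18, x ≠ y →
      Disjoint (((if x = 0 then tripLE N else tripLEF N)).map
        ⟨fun t => (x, t), by intro a b h; simpa [Prod.ext_iff] using h⟩)
        (((if y = 0 then tripLE N else tripLEF N)).map
        ⟨fun t => (y, t), by intro a b h; simpa [Prod.ext_iff] using h⟩) := by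
    intro x _ y _ hxy
    simp only [Finset.disjoint_left, Finset.mem_map, Function.Embedding.coeFn_mk]
    rintro p ⟨a, _, rfl⟩ ⟨b, _, h⟩
    exact hxy (congrArg Prod.fst h).symm
  rw [DD, card_biUnion hdisj]
  simp only [Finset.card_map]
  rw [Finset.sum_range_succ' (fun r => ((if r = 0 then tripLE N else tripLEF N)).card)]
  have e1 : ∀ x : ℕ, (if x + 1 = 0 then tripLE N else tripLEF N) = tripLEF N := by
    intro x; rw [if_neg (Nat.succ_ne_zero x)]
  simp only [e1, if_pos rfl, ite_true, Finset.sum_const, card_range, smul_eq_mul]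
  linarith [card_tripLE N, card_tripLEF N]
/-- integer points of the (dilated) scaled Reeve tetrahedron, scale N -/
def RZ (N : ℕ) : Set (Fin 3 → ℤ) :=
  {w | 0 ≤ w 2 ∧ w 2 ≤ 18 * w 0 ∧ w 2 ≤ 18 * w 1 ∧ 18 * (w 0 + w 1) ≤ 18 * N + w 2}

/-- the parametrization of those integer points -/
def ψ (a : ℕ × (ℕ × ℕ × ℕ)) : Fin 3 → ℤ :=
  ![ (a.2.1 + a.2.2.2 + (if a.1 = 0 then 0 else 1) : ℕ),
     (a.2.2.1 + a.2.2.2 + (if a.1 = 0 then 0 else 1) : ℕ),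
     (18 * a.2.2.2 + a.1 : ℕ) ]

lemma psi_injOn (N : ℕ) : Set.InjOn ψ (DD N) := by
  rintro ⟨r, u, v, q⟩ ha ⟨r', u', v', q'⟩ hb h
  have ha' := mem_DD.1 (by exact_mod_cast ha)
  have hb' := mem_DD.1 (by exact_mod_cast hb)
  have h0 := congrFun h 0
  have h1 := congrFun h 1
  have h2 := congrFun h 2
  simp only [ψ, Matrix.cons_val_zero, Matrix.cons_val_one, Matrix.head_cons,
    Matrix.cons_val_two, Matrix.tail_cons] at h0 h1 h2
  have e0 : u + q + (if r = 0 then 0 else 1) = u' + q' + (if r' = 0 then 0 else 1) := by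
    exact_mod_cast h0
  have e1 : v + q + (if r = 0 then 0 else 1) = v' + q' + (if r' = 0 then 0 else 1) := by
    exact_mod_cast h1
  have e2 : 18 * q + r = 18 * q' + r' := by exact_mod_cast h2
  simp only [Prod.mk.injEq]
  obtain ⟨hr18, -, -⟩ := ha'
  obtain ⟨hr18', -, -⟩ := hb'
  split_ifs at e0 e1 <;> omega

lemma coe_FR (N : ℕ) : (↑((DD N).image ψ) : Set (Fin 3 → ℤ)) = RZ N := by
  ext w
  simp only [Finset.coe_image, Set.mem_image, Finset.mem_coe, RZ, Set.mem_setOf_eq]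
  constructor
  · rintro ⟨⟨r, u, v, q⟩, ha, rfl⟩
    obtain ⟨hr18, hle, hif⟩ := mem_DD.1 ha
    simp only at hle hif
    have e0 : ψ (r,u,v,q) 0 = ((u + q + if r = 0 then 0 else 1 : ℕ) : ℤ) := rfl
    have e1 : ψ (r,u,v,q) 1 = ((v + q + if r = 0 then 0 else 1 : ℕ) : ℤ) := rfl
    have e2 : ψ (r,u,v,q) 2 = ((18 * q + r : ℕ) : ℤ) := rfl
    refine ⟨?_, ?_, ?_, ?_⟩ <;> simp only [e0, e1, e2] <;> (try split_ifs with h0) <;>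
      push_cast <;> omega
  · rintro ⟨h2nn, hx, hy, hs⟩
    have hz18 : w 2 = 18 * (w 2 / 18) + w 2 % 18 := (Int.mul_ediv_add_emod (w 2) 18).symm
    have hmod : 0 ≤ w 2 % 18 := Int.emod_nonneg _ (by norm_num)
    have hmodlt : w 2 % 18 < 18 := Int.emod_lt_of_pos _ (by norm_num)
    have hqnn : 0 ≤ w 2 / 18 := Int.ediv_nonneg h2nn (by norm_num)
    obtain ⟨q, hqz⟩ : ∃ q : ℕ, (q : ℤ) = w 2 / 18 := ⟨_, Int.toNat_of_nonneg hqnn⟩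
    obtain ⟨r, hrz⟩ : ∃ r : ℕ, (r : ℤ) = w 2 % 18 := ⟨_, Int.toNat_of_nonneg hmod⟩
    obtain ⟨u, huz⟩ : ∃ u : ℕ, (u : ℤ) = w 0 - q - (if r = 0 then 0 else 1) := by
      refine ⟨_, Int.toNat_of_nonneg ?_⟩
      split_ifs with h0 <;> push_cast <;> omega
    obtain ⟨v, hvz⟩ : ∃ v : ℕ, (v : ℤ) = w 1 - q - (if r = 0 then 0 else 1) := by
      refine ⟨_, Int.toNat_of_nonneg ?_⟩
      split_ifs with h0 <;> push_cast <;> omega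
    refine ⟨(r, u, v, q), ?_, ?_⟩
    · rw [mem_DD]
      refine ⟨by omega, ?_, ?_⟩ <;> simp only <;> split_ifs at huz hvz with h0 <;>
        push_cast at huz hvz <;> omega
    · have e0 : ψ (r,u,v,q) 0 = ((u + q + if r = 0 then 0 else 1 : ℕ) : ℤ) := rfl
      have e1 : ψ (r,u,v,q) 1 = ((v + q + if r = 0 then 0 else 1 : ℕ) : ℤ) := rfl
      have e2 : ψ (r,u,v,q) 2 = ((18 * q + r : ℕ) : ℤ) := rfl
      funext i
      fin_cases i
      · show ψ (r,u,v,q) 0 = w 0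
        rw [e0]
        split_ifs at huz ⊢ with h0 <;> push_cast <;> omega
      · show ψ (r,u,v,q) 1 = w 1
        rw [e1]
        split_ifs at hvz ⊢ with h0 <;> push_cast <;> omega
      · show ψ (r,u,v,q) 2 = w 2
        rw [e2]
        push_cast
        omega

lemma card_FR (N : ℕ) : (((DD N).image ψ).card) * 6 = (N+1)*(N+2)*(N+3) + 17 * ((N-1)*N*(N+1)) := by
  rw [Finset.card_image_of_injOn (psi_injOn N)]
  exact card_DD N
open Set

/-- vertices of the Reeve tetrahedron (with multiplier 18), scaled by s -/
def rv (s : ℝ) : Fin 4 → (Fin 3 → ℝ) :=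
  ![![0,0,0], ![s,0,0], ![0,s,0], ![s,s,18*s]]

/-- the scaled Reeve tetrahedron as an intersection of halfspaces -/
def RSet (s : ℝ) : Set (Fin 3 → ℝ) :=
  {w | 0 ≤ w 2 ∧ w 2 ≤ 18 * w 0 ∧ w 2 ≤ 18 * w 1 ∧ 18 * (w 0 + w 1) ≤ 18 * s + w 2}

lemma fin3_ext {α : Type*} {f g : Fin 3 → α} (h0 : f 0 = g 0) (h1 : f 1 = g 1)
    (h2 : f 2 = g 2) : f = g := by
  funext i
  fin_cases i <;> assumption

lemma convex_RSet (s : ℝ) : Convex ℝ (RSet s) := by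
  rintro x ⟨hx1, hx2, hx3, hx4⟩ y ⟨hy1, hy2, hy3, hy4⟩ a b ha hb hab
  have e : ∀ i, (a • x + b • y) i = a * x i + b * y i := fun i => rfl
  refine ⟨?_, ?_, ?_, ?_⟩ <;> simp only [e] <;> nlinarith

lemma rv_mem_RSet (s : ℝ) (hs : 0 ≤ s) : ∀ i, rv s i ∈ RSet s := by
  intro i
  fin_cases i <;>
    refine ⟨?_, ?_, ?_, ?_⟩ <;>
    simp [rv] <;> linarith

lemma reeve_hull (s : ℝ) (hs : 0 < s) : convexHull ℝ (Set.range (rv s)) = RSet s := by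
  apply le_antisymm
  · exact convexHull_min (by rintro _ ⟨i, rfl⟩; exact rv_mem_RSet s hs.le i) (convex_RSet s)
  · rintro w ⟨h1, h2, h3, h4⟩
    have h18s : (0:ℝ) < 18 * s := by linarith
    set wt : Fin 4 → ℝ :=
      ![(18 * s - 18 * (w 0 + w 1) + w 2) / (18 * s),
        (18 * w 0 - w 2) / (18 * s),
        (18 * w 1 - w 2) / (18 * s),
        w 2 / (18 * s)] with hwt
    have hwt0 : ∀ i, 0 ≤ wt i := by
      intro i
      fin_cases i <;>
        simp only [hwt, Matrix.cons_val_zero, Matrix.cons_val_one, Matrix.head_cons,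
          Matrix.cons_val_two, Matrix.tail_cons, Matrix.cons_val_three] <;>
        apply div_nonneg _ h18s.le <;> linarith
    have hwts : ∑ i, wt i = 1 := by
      rw [Fin.sum_univ_four]
      simp only [hwt, Matrix.cons_val_zero, Matrix.cons_val_one, Matrix.head_cons,
        Matrix.cons_val_two, Matrix.tail_cons, Matrix.cons_val_three]
      field_simp
      ring
    have key : Finset.univ.centerMass wt (rv s) = w := by
      rw [Finset.centerMass, hwts, inv_one, one_smul, Fin.sum_univ_four]
      apply fin3_ext <;>
        simp only [rv, hwt, Matrix.cons_val_zero, Matrix.cons_val_one, Matrix.head_cons,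
          Matrix.cons_val_two, Matrix.tail_cons, Matrix.cons_val_three, Pi.add_apply,
          Pi.smul_apply, smul_eq_mul] <;>
        (field_simp; try ring)
    rw [← key]
    exact Finset.centerMass_mem_convexHull Finset.univ (fun i _ => hwt0 i)
      (by rw [hwts]; norm_num) (fun i _ => Set.mem_range_self i)

/-- the cube [0,t]^k is the hull of its vertex set {0,t}^k -/
lemma cube_hull (k : ℕ) (t : ℝ) (ht : 0 ≤ t) :
    convexHull ℝ (Set.pi Set.univ (fun _ : Fin k => ({0, t} : Set ℝ)))
      = Set.pi Set.univ (fun _ : Fin k => Set.Icc (0:ℝ) t) := by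
  rw [convexHull_pi]
  congr 1
  funext i
  rw [convexHull_pair, segment_eq_Icc ht]
open Pointwise

lemma fin4_cases {P : Fin 4 → Prop} (h0 : P 0) (h1 : P 1) (h2 : P 2) (h3 : P 3) :
    ∀ i, P i := by
  intro i; fin_cases i <;> assumption

/-- gluing equivalence, real coefficients -/
noncomputable def Lr (k : ℕ) : ((Fin 3 → ℝ) × (Fin k → ℝ)) ≃ₗ[ℝ] (Fin (3+k) → ℝ) :=
  (LinearEquiv.sumArrowLequivProdArrow (Fin 3) (Fin k) ℝ ℝ).symm.trans
    (LinearEquiv.funCongrLeft ℝ ℝ finSumFinEquiv.symm)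

lemma Lr_apply (k : ℕ) (p : (Fin 3 → ℝ) × (Fin k → ℝ)) (i : Fin (3+k)) :
    Lr k p i = Sum.elim p.1 p.2 (finSumFinEquiv.symm i) := rfl

/-- gluing equivalence, integer level -/
def Lz (k : ℕ) : ((Fin 3 → ℤ) × (Fin k → ℤ)) ≃ (Fin (3+k) → ℤ) :=
  (Equiv.sumArrowEquivProdArrow (Fin 3) (Fin k) ℤ).symm.trans
    (Equiv.arrowCongr finSumFinEquiv (Equiv.refl ℤ))

lemma Lz_apply (k : ℕ) (p : (Fin 3 → ℤ) × (Fin k → ℤ)) (i : Fin (3+k)) :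
    Lz k p i = Sum.elim p.1 p.2 (finSumFinEquiv.symm i) := rfl

lemma cast_Lz (k : ℕ) (p : (Fin 3 → ℤ) × (Fin k → ℤ)) :
    (fun i => ((Lz k p i : ℤ) : ℝ)) =
      Lr k (fun a => ((p.1 a : ℤ) : ℝ), fun b => ((p.2 b : ℤ) : ℝ)) := by
  funext i
  rw [Lr_apply, Lz_apply]
  rcases h : finSumFinEquiv.symm i with a | b <;> simp

/-- vertex set of our polytope -/
noncomputable def VF (k : ℕ) : Finset (Fin (3+k) → ℝ) :=
  ((Finset.univ.image (rv ((k:ℝ)+1))) ×ˢ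
    (Fintype.piFinset fun _ : Fin k => ({0, 1} : Finset ℝ))).image (fun p => Lr k p)

/-- the polytope -/
noncomputable def PP (k : ℕ) : Set (Fin (3+k) → ℝ) := convexHull ℝ ↑(VF k)

lemma coe_VF (k : ℕ) : (↑(VF k) : Set (Fin (3+k) → ℝ)) =
    (Lr k) '' ((Set.range (rv ((k:ℝ)+1))) ×ˢ (Set.pi Set.univ fun _ : Fin k => ({0, 1} : Set ℝ))) := by
  rw [VF, Finset.coe_image, Finset.coe_product, Finset.coe_image, Finset.coe_univ,
    Set.image_univ, Fintype.coe_piFinset]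
  congr 1
  ext p
  simp

lemma smul_image_Lr (k : ℕ) (a : ℝ) (S : Set ((Fin 3 → ℝ) × (Fin k → ℝ))) :
    a • ((Lr k) '' S) = (Lr k) '' (a • S) := by
  ext x
  simp only [Set.mem_smul_set, Set.mem_image]
  constructor
  · rintro ⟨-, ⟨y, hy, rfl⟩, rfl⟩
    exact ⟨a • y, ⟨y, hy, rfl⟩, map_smul (Lr k) a y⟩
  · rintro ⟨-, ⟨y, hy, rfl⟩, rfl⟩
    exact ⟨Lr k y, ⟨y, hy, rfl⟩, (map_smul (Lr k) a y).symm⟩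

lemma smul_set_prod' {E F : Type*} [AddCommGroup E] [AddCommGroup F] [Module ℝ E] [Module ℝ F]
    (a : ℝ) (A : Set E) (B : Set F) : a • (A ×ˢ B) = (a • A) ×ˢ (a • B) := by
  ext ⟨x, y⟩
  constructor
  · rintro ⟨⟨p, q⟩, ⟨hp, hq⟩, h⟩
    have h' : (a • p, a • q) = (x, y) := h
    rw [Prod.mk.injEq] at h'
    rw [← h'.1, ← h'.2]
    exact ⟨⟨p, hp, rfl⟩, ⟨q, hq, rfl⟩⟩
  · rintro ⟨⟨p, hp, hpx⟩, ⟨q, hq, hqy⟩⟩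
    exact ⟨(p, q), ⟨hp, hq⟩, Prod.ext hpx hqy⟩

lemma smul_range_rv (a s : ℝ) : a • Set.range (rv s) = Set.range (rv (a * s)) := by
  have h : ∀ i, a • rv s i = rv (a * s) i := by
    refine fin4_cases ?_ ?_ ?_ ?_ <;> apply fin3_ext <;>
      simp only [rv, Pi.smul_apply, smul_eq_mul, Matrix.cons_val_zero, Matrix.cons_val_one,
        Matrix.head_cons, Matrix.cons_val_two, Matrix.tail_cons, Matrix.cons_val_three] <;>
      ring
  ext x
  simp only [Set.mem_smul_set, Set.mem_range]
  constructor
  · rintro ⟨-, ⟨i, rfl⟩, rfl⟩; exact ⟨i, (h i).symm⟩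
  · rintro ⟨i, rfl⟩; exact ⟨rv s i, ⟨i, rfl⟩, h i⟩

lemma smul_cube (k : ℕ) (a : ℝ) (ha : a ≠ 0) :
    a • (Set.pi Set.univ fun _ : Fin k => ({0, 1} : Set ℝ))
      = Set.pi Set.univ fun _ : Fin k => ({0, a} : Set ℝ) := by
  ext x
  rw [Set.mem_smul_set_iff_inv_smul_mem₀ ha]
  simp only [Set.mem_pi, Set.mem_univ, forall_true_left, Pi.smul_apply, smul_eq_mul,
    Set.mem_insert_iff, Set.mem_singleton_iff, true_implies]
  constructor
  · intro h i
    rcases h i with h' | h'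
    · left
      have := mul_eq_zero.1 h'
      rcases this with h'' | h''
      · exact absurd h'' (inv_ne_zero ha)
      · exact h''
    · right
      field_simp at h'
      exact h'
  · intro h i
    rcases h i with h' | h'
    · left; rw [h', mul_zero]
    · right; rw [h']; field_simp

lemma dilate_PP (k : ℕ) (n : ℕ) (hn : 0 < n) :
    (n : ℝ) • PP k = (Lr k) ''
      ((RSet (((k:ℝ)+1) * n)) ×ˢ (Set.pi Set.univ fun _ : Fin k => Set.Icc (0:ℝ) n)) := by
  have hn0 : (0:ℝ) < n := by exact_mod_cast hn
  rw [PP, ← convexHull_smul, coe_VF, smul_image_Lr, smul_set_prod',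
    ← IsLinearMap.image_convexHull ⟨fun x y => map_add (Lr k) x y, fun c x => map_smul (Lr k) c x⟩]
  congr 1
  rw [convexHull_prod, smul_range_rv, smul_cube k _ (ne_of_gt hn0),
    reeve_hull _ (by positivity), cube_hull k _ hn0.le, mul_comm ((n:ℝ)) ((k:ℝ)+1)]
lemma cast_mem_RSet_iff (k n : ℕ) (w : Fin 3 → ℤ) :
    (fun i => ((w i : ℤ) : ℝ)) ∈ RSet (((k:ℝ)+1) * n) ↔ w ∈ RZ ((k+1)*n) := by
  simp only [RSet, RZ, Set.mem_setOf_eq]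
  constructor <;> intro h <;>
    exact ⟨by exact_mod_cast h.1, by exact_mod_cast h.2.1, by exact_mod_cast h.2.2.1,
      by exact_mod_cast h.2.2.2⟩

lemma latticeCount_PP (k n : ℕ) (hn : 0 < n) :
    (latticeCount (PP k) n : ℤ)
      = (3*((k+1)*n : ℤ)^3 + ((k+1)*n : ℤ)^2 - ((k+1)*n : ℤ) + 1) * ((n : ℤ)+1)^k := by
  have hset : {x : Fin (3+k) → ℤ | (fun i => (x i : ℝ)) ∈ (n : ℝ) • PP k}
      = (Lz k) '' ((RZ ((k+1)*n)) ×ˢ {b : Fin k → ℤ | ∀ i, b i ∈ Finset.Icc (0:ℤ) n}) := by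
    ext x
    rw [Set.mem_setOf_eq, dilate_PP k n hn]
    have hx : (fun i => ((x i : ℤ) : ℝ))
        = Lr k (fun a => (((Lz k).symm x).1 a : ℝ), fun b => (((Lz k).symm x).2 b : ℝ)) := by
      conv_lhs => rw [← (Lz k).apply_symm_apply x]
      exact cast_Lz k ((Lz k).symm x)
    constructor
    · rintro ⟨⟨w, b⟩, ⟨hw, hb⟩, heq⟩
      have : (w, b) = (fun a => (((Lz k).symm x).1 a : ℝ), fun b => (((Lz k).symm x).2 b : ℝ)) :=
        (Lr k).injective (by rw [heq, hx])
      rw [Prod.mk.injEq] at this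
      obtain ⟨hw', hb'⟩ := this
      subst hw'; subst hb'
      refine ⟨(Lz k).symm x, ⟨?_, ?_⟩, (Lz k).apply_symm_apply x⟩
      · exact (cast_mem_RSet_iff k n _).1 hw
      · intro i
        have := hb i (Set.mem_univ i)
        simp only [Set.mem_Icc] at this
        rw [Finset.mem_Icc]
        exact ⟨by exact_mod_cast this.1, by exact_mod_cast this.2⟩
    · rintro ⟨⟨w, b⟩, ⟨hw, hb⟩, rfl⟩
      refine ⟨(fun a => ((w a : ℤ) : ℝ), fun j => ((b j : ℤ) : ℝ)), ⟨?_, ?_⟩, ?_⟩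
      · exact (cast_mem_RSet_iff k n w).2 hw
      · intro i _
        have h1 := Finset.mem_Icc.1 (hb i)
        show ((b i : ℤ) : ℝ) ∈ Set.Icc (0:ℝ) (n:ℝ)
        rw [Set.mem_Icc]
        exact ⟨by exact_mod_cast h1.1, by exact_mod_cast h1.2⟩
      · rw [← cast_Lz k (w, b)]
  rw [latticeCount, hset, Set.ncard_image_of_injective _ (Lz k).injective]
  have hc1 : RZ ((k+1)*n) = ↑((DD ((k+1)*n)).image ψ) := (coe_FR ((k+1)*n)).symm
  have hc2 : {b : Fin k → ℤ | ∀ i, b i ∈ Finset.Icc (0:ℤ) n}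
      = ↑(Fintype.piFinset fun _ : Fin k => Finset.Icc (0:ℤ) n) := by
    ext b
    simp [Fintype.mem_piFinset, Finset.mem_Icc, Pi.le_def, forall_and]
  rw [hc1, hc2, ← Finset.coe_product, Set.ncard_coe_finset, Finset.card_product]
  have hFC : (Fintype.piFinset fun _ : Fin k => Finset.Icc (0:ℤ) n).card = (n+1)^k := by
    rw [Fintype.card_piFinset]
    have : (Finset.Icc (0:ℤ) n).card = n + 1 := by
      rw [Int.card_Icc]
      simp
    simp [this]
  set N : ℕ := (k+1)*n with hN
  have hN1 : 1 ≤ N := Nat.one_le_iff_ne_zero.2 (Nat.pos_iff_ne_zero.1 (Nat.mul_pos (Nat.succ_pos k) hn))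
  have h6 := card_FR N
  have hcast : (((DD N).image ψ).card : ℤ) * 6
      = (3*(N:ℤ)^3 + (N:ℤ)^2 - (N:ℤ) + 1) * 6 := by
    have h6' : ((((DD N).image ψ).card * 6 : ℕ) : ℤ)
        = (((N+1)*(N+2)*(N+3) + 17*((N-1)*N*(N+1)) : ℕ) : ℤ) := by exact_mod_cast congrArg (fun t : ℕ => (t : ℤ)) h6
    push_cast [Nat.cast_sub hN1] at h6'
    linear_combination h6'
  have hcard : (((DD N).image ψ).card : ℤ) = 3*(N:ℤ)^3 + (N:ℤ)^2 - (N:ℤ) + 1 := by linarith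
  rw [Nat.cast_mul, hcard, hFC, hN]
  push_cast
  ring
lemma fin3_cases {P : Fin 3 → Prop} (h0 : P 0) (h1 : P 1) (h2 : P 2) : ∀ i, P i := by
  intro i; fin_cases i <;> assumption

def rvZ (k : ℕ) : Fin 4 → Fin 3 → ℤ :=
  ![![0,0,0], ![(k:ℤ)+1,0,0], ![0,(k:ℤ)+1,0], ![(k:ℤ)+1,(k:ℤ)+1,18*((k:ℤ)+1)]]

lemma rv_cast (k : ℕ) : ∀ iv, rv ((k:ℝ)+1) iv = fun a => ((rvZ k iv a : ℤ) : ℝ) := by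
  refine fin4_cases ?_ ?_ ?_ ?_ <;> apply fin3_ext <;>
    simp only [rv, rvZ, Matrix.cons_val_zero, Matrix.cons_val_one, Matrix.head_cons,
      Matrix.cons_val_two, Matrix.tail_cons, Matrix.cons_val_three] <;>
    push_cast <;> ring

lemma rv_zero (s : ℝ) : rv s 0 = 0 := by
  apply fin3_ext <;> rfl

lemma mem_VF (k : ℕ) (i : Fin 4) (b : Fin k → ℝ) (hb : ∀ j, b j = 0 ∨ b j = 1) :
    Lr k (rv ((k:ℝ)+1) i, b) ∈ VF k := by
  refine Finset.mem_image.2 ⟨(rv ((k:ℝ)+1) i, b), Finset.mem_product.2 ⟨?_, ?_⟩, rfl⟩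
  · exact Finset.mem_image.2 ⟨i, Finset.mem_univ i, rfl⟩
  · rw [Fintype.mem_piFinset]
    intro a
    rcases hb a with h | h <;> simp [h]

lemma span_PP (k : ℕ) : vectorSpan ℝ (PP k) = ⊤ := by
  have hc : ((k:ℝ)+1) ≠ 0 := by positivity
  have hmem : ∀ (i : Fin 4) (b : Fin k → ℝ), (∀ j, b j = 0 ∨ b j = 1) →
      Lr k (rv ((k:ℝ)+1) i, b) ∈ PP k :=
    fun i b hb => subset_convexHull ℝ _ (mem_VF k i b hb)
  have h00 : (0 : Fin (3+k) → ℝ) ∈ PP k := by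
    have := hmem 0 0 (fun j => Or.inl rfl)
    rwa [rv_zero, show ((0 : Fin 3 → ℝ), (0 : Fin k → ℝ)) = 0 from rfl, map_zero] at this
  have hu : ∀ i : Fin 4, Lr k (rv ((k:ℝ)+1) i, 0) ∈ vectorSpan ℝ (PP k) := by
    intro i
    have h := vsub_mem_vectorSpan ℝ (hmem i 0 (fun j => Or.inl rfl)) h00
    rwa [vsub_eq_sub, sub_zero] at h
  have hw : ∀ j : Fin k, Lr k ((0 : Fin 3 → ℝ), (Pi.single j 1 : Fin k → ℝ)) ∈ vectorSpan ℝ (PP k) := by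
    intro j
    have hb : ∀ a, (Pi.single j 1 : Fin k → ℝ) a = 0 ∨ (Pi.single j 1 : Fin k → ℝ) a = 1 := by
      intro a
      rcases eq_or_ne a j with rfl | h
      · right; simp
      · left; simp [Pi.single_apply, h]
    have h := vsub_mem_vectorSpan ℝ (hmem 0 ((Pi.single j 1 : Fin k → ℝ)) hb) h00
    rwa [vsub_eq_sub, sub_zero, rv_zero] at h
  rw [Submodule.eq_top_iff']
  intro x
  set y : Fin 3 → ℝ := ((Lr k).symm x).1 with hy
  set z : Fin k → ℝ := ((Lr k).symm x).2 with hz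
  set c : ℝ := (k:ℝ)+1 with hcc
  set a3 : ℝ := y 2 / (18*c) with ha3
  set a1 : ℝ := y 0 / c - a3 with ha1
  set a2 : ℝ := y 1 / c - a3 with ha2
  have hx : x = a1 • Lr k (rv c 1, 0) + a2 • Lr k (rv c 2, 0) + a3 • Lr k (rv c 3, 0)
      + ∑ j, z j • Lr k ((0 : Fin 3 → ℝ), (Pi.single j 1 : Fin k → ℝ)) := by
    have hrhs : a1 • Lr k (rv c 1, 0) + a2 • Lr k (rv c 2, 0) + a3 • Lr k (rv c 3, 0)
        + ∑ j, z j • Lr k ((0 : Fin 3 → ℝ), (Pi.single j 1 : Fin k → ℝ))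
        = Lr k (a1 • rv c 1 + a2 • rv c 2 + a3 • rv c 3,
            ∑ j, z j • (Pi.single j 1 : Fin k → ℝ)) := by
      simp_rw [← map_smul]
      rw [← map_sum, ← map_add, ← map_add, ← map_add]
      congr 1
      apply Prod.ext <;> simp [Prod.fst_sum, Prod.snd_sum]
    rw [hrhs]
    have hsum : ∑ j, z j • (Pi.single j 1 : Fin k → ℝ) = z := by
      have : ∀ j : Fin k, z j • (Pi.single j 1 : Fin k → ℝ) = (Pi.single j (z j) : Fin k → ℝ) := by
        intro j
        rw [← Pi.single_smul, smul_eq_mul, mul_one]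
      simp_rw [this]
      exact Finset.univ_sum_single z
    have hfst : a1 • rv c 1 + a2 • rv c 2 + a3 • rv c 3 = y := by
      apply fin3_ext <;>
        simp only [rv, Pi.add_apply, Pi.smul_apply, smul_eq_mul, Matrix.cons_val_zero,
          Matrix.cons_val_one, Matrix.head_cons, Matrix.cons_val_two, Matrix.tail_cons,
          Matrix.cons_val_three, ha1, ha2, ha3] <;>
        field_simp <;> ring
    rw [hsum, hfst, hy, hz]
    exact ((Lr k).apply_symm_apply x).symm
  rw [hx]
  refine Submodule.add_mem _ (Submodule.add_mem _ (Submodule.add_mem _ ?_ ?_) ?_) ?_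
  · exact Submodule.smul_mem _ _ (hu 1)
  · exact Submodule.smul_mem _ _ (hu 2)
  · exact Submodule.smul_mem _ _ (hu 3)
  · exact Submodule.sum_mem _ (fun j _ => Submodule.smul_mem _ _ (hw j))

lemma dim_PP (k : ℕ) : polytopeDim (PP k) = 3 + k := by
  rw [polytopeDim, span_PP, finrank_top]
  rw [Module.finrank_pi]
  exact Fintype.card_fin _

lemma integral_PP (k : ℕ) : IsIntegralPolytope (PP k) := by
  refine ⟨VF k, ⟨Lr k (rv ((k:ℝ)+1) 0, 0), mem_VF k 0 0 (fun j => Or.inl rfl)⟩, ?_, rfl⟩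
  intro v hv i
  obtain ⟨⟨w, b⟩, hmem, rfl⟩ := Finset.mem_image.1 hv
  obtain ⟨hw, hb⟩ := Finset.mem_product.1 hmem
  obtain ⟨iv, -, rfl⟩ := Finset.mem_image.1 hw
  rw [Lr_apply]
  rcases h : finSumFinEquiv.symm i with a | j
  · simp only [Sum.elim_inl]
    exact ⟨rvZ k iv a, congrFun (rv_cast k iv) a⟩
  · simp only [Sum.elim_inr]
    have := Fintype.mem_piFinset.1 hb j
    simp only [Finset.mem_insert, Finset.mem_singleton] at this
    rcases this with h' | h'
    · exact ⟨0, by rw [h']; norm_num⟩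
    · exact ⟨1, by rw [h']; norm_num⟩
noncomputable def qPoly (k : ℕ) : Polynomial ℚ :=
  Polynomial.C (3*((k:ℚ)+1)^3) * Polynomial.X^3 + Polynomial.C (((k:ℚ)+1)^2) * Polynomial.X^2
    - Polynomial.C ((k:ℚ)+1) * Polynomial.X + Polynomial.C 1

noncomputable def pPoly (k : ℕ) : Polynomial ℚ := qPoly k * (Polynomial.X + 1)^k

lemma qPoly_coeff' (k : ℕ) (m : ℕ) : (qPoly k).coeff m =
    (if m = 3 then 3*((k:ℚ)+1)^3 else 0) + (if m = 2 then ((k:ℚ)+1)^2 else 0)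
      - (if m = 1 then ((k:ℚ)+1) else 0) + (if m = 0 then 1 else 0) := by
  simp only [qPoly, Polynomial.coeff_add, Polynomial.coeff_sub, Polynomial.coeff_C_mul,
    Polynomial.coeff_X_pow, Polynomial.coeff_C, Polynomial.coeff_X, mul_ite, mul_one, mul_zero]
  rcases m with _|_|_|_|m <;> norm_num

lemma qPoly_coeff0 (k : ℕ) : (qPoly k).coeff 0 = 1 := by rw [qPoly_coeff']; norm_num

lemma qPoly_coeff1 (k : ℕ) : (qPoly k).coeff 1 = -((k:ℚ)+1) := by rw [qPoly_coeff']; norm_num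

lemma qPoly_coeff2 (k : ℕ) : (qPoly k).coeff 2 = ((k:ℚ)+1)^2 := by rw [qPoly_coeff']; norm_num

lemma qPoly_coeff3 (k : ℕ) : (qPoly k).coeff 3 = 3*((k:ℚ)+1)^3 := by rw [qPoly_coeff']; norm_num

lemma qPoly_natDegree (k : ℕ) : (qPoly k).natDegree = 3 := by
  unfold qPoly
  compute_degree!

lemma qPoly_ne_zero (k : ℕ) : qPoly k ≠ 0 := fun h => by
  have h3 := qPoly_coeff3 k
  rw [h, Polynomial.coeff_zero] at h3
  have hpos : (0:ℚ) < 3*((k:ℚ)+1)^3 := by positivity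
  rw [← h3] at hpos
  exact lt_irrefl 0 hpos

lemma qPoly_coeff_ge4 (k : ℕ) {a : ℕ} (ha : 4 ≤ a) : (qPoly k).coeff a = 0 := by
  apply Polynomial.coeff_eq_zero_of_natDegree_lt
  rw [qPoly_natDegree]
  omega

lemma pPoly_natDegree (k : ℕ) : (pPoly k).natDegree = 3 + k := by
  have hX1 : (Polynomial.X + 1 : Polynomial ℚ) = Polynomial.X + Polynomial.C 1 := by simp
  rw [pPoly, Polynomial.natDegree_mul (qPoly_ne_zero k)
    (pow_ne_zero k (by rw [hX1]; exact Polynomial.X_add_C_ne_zero 1)), qPoly_natDegree,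
    Polynomial.natDegree_pow]
  have : (Polynomial.X + 1 : Polynomial ℚ).natDegree = 1 := by
    rw [show (Polynomial.X + 1 : Polynomial ℚ) = Polynomial.X + Polynomial.C 1 by simp]
    exact Polynomial.natDegree_X_add_C 1
  rw [this, mul_one]

lemma pPoly_eval (k : ℕ) (x : ℚ) :
    (pPoly k).eval x = (3*((k:ℚ)+1)^3*x^3 + ((k:ℚ)+1)^2*x^2 - ((k:ℚ)+1)*x + 1) * (x+1)^k := by
  simp [pPoly, qPoly]

lemma pPoly_coeff (k j : ℕ) (h3 : 3 ≤ j) :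
    (pPoly k).coeff j = (k.choose j : ℚ) - ((k:ℚ)+1) * (k.choose (j-1))
      + ((k:ℚ)+1)^2 * (k.choose (j-2)) + 3*((k:ℚ)+1)^3 * (k.choose (j-3)) := by
  rw [pPoly, Polynomial.coeff_mul, Finset.Nat.sum_antidiagonal_eq_sum_range_succ_mk]
  have hsub : Finset.range 4 ⊆ Finset.range (j+1) := by
    apply Finset.range_subset_range.2; omega
  rw [← Finset.sum_subset hsub (fun x _ hx => by
    rw [qPoly_coeff_ge4 k (by simpa using Nat.le_of_not_lt (fun h => hx (Finset.mem_range.2 h))),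
      zero_mul])]
  rw [show (4:ℕ) = 3+1 from rfl, Finset.sum_range_succ, Finset.sum_range_succ,
    Finset.sum_range_succ, Finset.sum_range_one]
  rw [qPoly_coeff0, qPoly_coeff1, qPoly_coeff2, qPoly_coeff3]
  simp only [Polynomial.coeff_X_add_one_pow, Nat.sub_zero]
  ring

lemma pPoly_coeff0 (k : ℕ) : (pPoly k).coeff 0 = 1 := by
  rw [pPoly, Polynomial.coeff_mul]
  simp [qPoly_coeff0, Polynomial.coeff_X_add_one_pow]

lemma pPoly_coeff1 (k : ℕ) : (pPoly k).coeff 1 = -1 := by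
  rw [pPoly, Polynomial.coeff_mul, Finset.Nat.sum_antidiagonal_eq_sum_range_succ_mk,
    Finset.sum_range_succ, Finset.sum_range_one]
  rw [qPoly_coeff0, qPoly_coeff1]
  simp only [Polynomial.coeff_X_add_one_pow]
  simp [Nat.choose_one_right]
  try ring

lemma pPoly_coeff2 (k : ℕ) : (pPoly k).coeff 2 = (k.choose 2 : ℚ) + (k:ℚ) + 1 := by
  rw [pPoly, Polynomial.coeff_mul, Finset.Nat.sum_antidiagonal_eq_sum_range_succ_mk,
    Finset.sum_range_succ, Finset.sum_range_succ, Finset.sum_range_one]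
  rw [qPoly_coeff0, qPoly_coeff1, qPoly_coeff2]
  simp only [Polynomial.coeff_X_add_one_pow]
  simp [Nat.choose_one_right]
  try ring

lemma pPoly_coeff_pos (k j : ℕ) (h3 : 3 ≤ j) (hjd : j ≤ 3 + k) : 0 < (pPoly k).coeff j := by
  rw [pPoly_coeff k j h3]
  have hA : (1:ℚ) ≤ (k.choose (j-3) : ℚ) := by
    have : 0 < k.choose (j-3) := Nat.choose_pos (by omega)
    exact_mod_cast this
  have hkey : (k.choose (j-1) : ℚ) ≤ (k:ℚ) * (k.choose (j-2)) := by
    have hnat : k.choose (j-1) ≤ k * k.choose (j-2) := by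
      rcases Nat.lt_or_ge k (j-1) with h | h
      · rw [Nat.choose_eq_zero_of_lt h]; exact Nat.zero_le _
      · have hm : j - 1 = (j-2) + 1 := by omega
        rw [hm]
        calc k.choose ((j-2)+1) ≤ k.choose ((j-2)+1) * ((j-2)+1) :=
              Nat.le_mul_of_pos_right _ (by omega)
          _ = k.choose (j-2) * (k - (j-2)) := Nat.choose_succ_right_eq k (j-2)
          _ ≤ k.choose (j-2) * k := Nat.mul_le_mul_left _ (Nat.sub_le k _)
          _ = k * k.choose (j-2) := Nat.mul_comm _ _
    exact_mod_cast hnat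
  have hB : (0:ℚ) ≤ (k.choose (j-2) : ℚ) := by positivity
  have hD : (0:ℚ) ≤ (k.choose j : ℚ) := by positivity
  have hc : (0:ℚ) < (k:ℚ)+1 := by positivity
  nlinarith [mul_le_mul_of_nonneg_left hkey hc.le, mul_nonneg hc.le hB,
    mul_pos (by positivity : (0:ℚ) < 3*((k:ℚ)+1)^3) (lt_of_lt_of_le zero_lt_one hA)]

theorem ehrhart_linear_coefficient_negative (d : ℕ) (hd : 3 ≤ d) :
    ∃ (N : ℕ) (P : Set (Fin N → ℝ)) (p : Polynomial ℚ),
      0 < N ∧ IsIntegralPolytope P ∧ polytopeDim P = d ∧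
      p.natDegree = d ∧
      (∀ n : ℕ, 0 < n → p.eval (n : ℚ) = (latticeCount P n : ℚ)) ∧
      p.coeff 1 < 0 ∧
      (∀ j : ℕ, j ≤ d → j ≠ 1 → 0 < p.coeff j) := by
  obtain ⟨k, rfl⟩ : ∃ k, d = 3 + k := ⟨d - 3, by omega⟩
  refine ⟨3 + k, PP k, pPoly k, by omega, integral_PP k, dim_PP k, pPoly_natDegree k, ?_, ?_, ?_⟩
  · intro n hn
    rw [pPoly_eval]
    have h := latticeCount_PP k n hn
    have h' : (latticeCount (PP k) n : ℚ)
        = ((3*((k+1)*n : ℤ)^3 + ((k+1)*n : ℤ)^2 - ((k+1)*n : ℤ) + 1) * ((n : ℤ)+1)^k : ℤ) := by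
      exact_mod_cast congrArg (fun t : ℤ => (t : ℚ)) h
    rw [h']
    push_cast
    ring
  · rw [pPoly_coeff1]; norm_num
  · intro j hj hj1
    match j, hj1 with
    | 0, _ => rw [pPoly_coeff0]; norm_num
    | 2, _ => rw [pPoly_coeff2]; positivity
    | (m+3), _ => exact pPoly_coeff_pos k (m+3) (by omega) hj
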